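/- Let γ have zero mean and unit variance, g : ℝ → [0,1] measurable, A > 0, σ_v² > 0. Then the SNDR given by (E[γg(γ)])²/(Var[g(γ)] − (E[γg(γ)])² + σ_v²/A²) satisfies SNDR ≤ A²/(4σ_v²), i.e., SNDR ≤ DSNR/4 where DSNR = A²/σ_v², provided the denominator is positive. -/

import Mathlib

open MeasureTheory Real

/-- SNDR upper bound by the dynamic signal-to-noise ratio: `SNDR ≤ A²/(4σ_v²)`. -/
theorem stmt_13 {Ω : Type*} [MeasurableSpace Ω] (μ : Measure Ω) [IsProbabilityMeasure μ]
    (γ : Ω → ℝ) (g : ℝ → ℝ) (A σv : ℝ)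
    (hγ : Measurable γ) (hg : Measurable g)
    (hγ2 : Integrable (fun ω => (γ ω) ^ 2) μ)
    (hmean : ∫ ω, γ ω ∂μ = 0)
    (hvar : ∫ ω, (γ ω) ^ 2 ∂μ = 1)
    (hg01 : ∀ t, 0 ≤ g t ∧ g t ≤ 1)
    (hA : 0 < A) (hσv : 0 < σv ^ 2)
    (hden : 0 < ((∫ ω, (g (γ ω)) ^ 2 ∂μ) - (∫ ω, g (γ ω) ∂μ) ^ 2)
        - (∫ ω, γ ω * g (γ ω) ∂μ) ^ 2 + σv ^ 2 / A ^ 2) :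
    (∫ ω, γ ω * g (γ ω) ∂μ) ^ 2 /
        (((∫ ω, (g (γ ω)) ^ 2 ∂μ) - (∫ ω, g (γ ω) ∂μ) ^ 2)
          - (∫ ω, γ ω * g (γ ω) ∂μ) ^ 2 + σv ^ 2 / A ^ 2)
      ≤ A ^ 2 / (4 * σv ^ 2) := by
  set α := ∫ ω, γ ω * g (γ ω) ∂μ with hαdef
  set m := ∫ ω, g (γ ω) ∂μ with hmdef
  set S := ∫ ω, (g (γ ω)) ^ 2 ∂μ with hSdef
  have hgb : ∀ ω, |g (γ ω)| ≤ 1 := fun ω =>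
    abs_le.2 ⟨by linarith [(hg01 (γ ω)).1], (hg01 (γ ω)).2⟩
  have hmeas_g : AEStronglyMeasurable (fun ω => g (γ ω)) μ :=
    (hg.comp hγ).aestronglyMeasurable
  have int_g : Integrable (fun ω => g (γ ω)) μ :=
    (integrable_const (1 : ℝ)).mono' hmeas_g (Filter.Eventually.of_forall hgb)
  have int_g2 : Integrable (fun ω => (g (γ ω)) ^ 2) μ := by
    refine (integrable_const (1 : ℝ)).mono' (hmeas_g.pow 2) (Filter.Eventually.of_forall ?_)
    intro ω
    have := hgb ω
    rw [Real.norm_eq_abs, abs_of_nonneg (sq_nonneg _)]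
    nlinarith [(hg01 (γ ω)).1, (hg01 (γ ω)).2]
  have int_γ : Integrable γ μ := by
    refine (hγ2.add (integrable_const (1 : ℝ))).mono' hγ.aestronglyMeasurable
      (Filter.Eventually.of_forall fun ω => ?_)
    have h1 : |γ ω| ≤ (γ ω) ^ 2 + 1 := by nlinarith [sq_nonneg (|γ ω| - 1), abs_nonneg (γ ω), sq_abs (γ ω)]
    simpa using h1
  have int_γg : Integrable (fun ω => γ ω * g (γ ω)) μ := by
    refine int_γ.abs.mono' (hγ.aestronglyMeasurable.mul hmeas_g)
      (Filter.Eventually.of_forall fun ω => ?_)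
    rw [Real.norm_eq_abs, abs_mul]
    calc |γ ω| * |g (γ ω)| ≤ |γ ω| * 1 := by
          exact mul_le_mul_of_nonneg_left (hgb ω) (abs_nonneg _)
      _ = |γ ω| := mul_one _
  -- key: 0 ≤ ∫ ((g∘γ - m) - α γ)² = S - m² - α²
  have key : α ^ 2 ≤ S - m ^ 2 := by
    have e : ∫ ω, ((g (γ ω) - m) - α * γ ω) ^ 2 ∂μ = S - m ^ 2 - α ^ 2 := by
      have hfun : ∀ ω, ((g (γ ω) - m) - α * γ ω) ^ 2 =
          (g (γ ω)) ^ 2 + ((-2 * m) * g (γ ω) + ((-2 * α) * (γ ω * g (γ ω)) +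
            ((2 * m * α) * γ ω + (α ^ 2 * (γ ω) ^ 2 + m ^ 2)))) := by
        intro ω; ring
      simp_rw [hfun]
      rw [integral_add int_g2, integral_add (int_g.const_mul _),
        integral_add (int_γg.const_mul _), integral_add (int_γ.const_mul _),
        integral_add (hγ2.const_mul _) (integrable_const _),
        integral_const_mul, integral_const_mul, integral_const_mul, integral_const_mul,
        integral_const]
      · rw [hmean, hvar]
        simp only [smul_eq_mul, measure_univ, probReal_univ, ENNReal.toReal_one, one_mul]
        rw [← hmdef, ← hαdef, ← hSdef]
        ring
      · apply Integrable.add ((hγ2.const_mul _)) (integrable_const _)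
      · apply Integrable.add (int_γ.const_mul _)
        apply Integrable.add ((hγ2.const_mul _)) (integrable_const _)
      · apply Integrable.add (int_γg.const_mul _)
        apply Integrable.add (int_γ.const_mul _)
        apply Integrable.add ((hγ2.const_mul _)) (integrable_const _)
      · apply Integrable.add (int_g.const_mul _)
        apply Integrable.add (int_γg.const_mul _)
        apply Integrable.add (int_γ.const_mul _)
        apply Integrable.add ((hγ2.const_mul _)) (integrable_const _)
    have h0 : 0 ≤ ∫ ω, ((g (γ ω) - m) - α * γ ω) ^ 2 ∂μ :=
      integral_nonneg fun ω => sq_nonneg _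
    linarith [e ▸ h0]
  have hSm : S ≤ m := by
    refine integral_mono int_g2 int_g fun ω => ?_
    nlinarith [(hg01 (γ ω)).1, (hg01 (γ ω)).2]
  have hα14 : α ^ 2 ≤ 1 / 4 := by nlinarith [sq_nonneg (m - 1 / 2)]
  have hs : (0 : ℝ) < σv ^ 2 / A ^ 2 := div_pos hσv (by positivity)
  have hdenge : σv ^ 2 / A ^ 2 ≤ S - m ^ 2 - α ^ 2 + σv ^ 2 / A ^ 2 := by linarith
  calc α ^ 2 / (S - m ^ 2 - α ^ 2 + σv ^ 2 / A ^ 2)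
      ≤ (1 / 4) / (σv ^ 2 / A ^ 2) := div_le_div₀ (by norm_num) hα14 hs hdenge
    _ = A ^ 2 / (4 * σv ^ 2) := by
        field_simp
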